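/- Let φ ∈ ℝ. Then there exists a constant c(φ) > 0 such that for all p ∈ (0, ∞), the global curvature energy satisfies U_p(E_φ) ≤ c(φ)^p · U_p(E_{π/2}). -/

import Mathlib

open MeasureTheory Real
open scoped ENNReal NNReal Classical

/-- The Menger curvature of three points in `ℝⁿ`: the reciprocal of the circumradius,
`κ(x,y,z) = 2 dist(z, L_{x,y}) / (|x-z| |y-z|)` for pairwise distinct non-collinear points,
and `0` otherwise. -/
noncomputable def menger {n : ℕ} (x y z : EuclideanSpace ℝ (Fin n)) : ℝ :=
  if x ≠ y ∧ y ≠ z ∧ x ≠ z ∧ ¬ Collinear ℝ ({x, y, z} : Set (EuclideanSpace ℝ (Fin n)))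
  then 2 * Metric.infDist z (affineSpan ℝ ({x, y} : Set (EuclideanSpace ℝ (Fin n))) :
      Set (EuclideanSpace ℝ (Fin n))) / (dist x z * dist y z)
  else 0

/-- The point `(a, b) ∈ ℝ²` (with the Euclidean metric). -/
noncomputable def pt (a b : ℝ) : EuclideanSpace ℝ (Fin 2) :=
  (WithLp.equiv 2 (Fin 2 → ℝ)).symm ![a, b]

/-- The one-corner set `E_φ = ([0,1) × {0}) ∪ [0,1)·(cos φ, sin φ)`. -/
noncomputable def Eset (φ : ℝ) : Set (EuclideanSpace ℝ (Fin 2)) :=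
  {x | ∃ t ∈ Set.Ico (0:ℝ) 1, x = pt t 0} ∪
    {x | ∃ t ∈ Set.Ico (0:ℝ) 1, x = t • pt (Real.cos φ) (Real.sin φ)}

/-- Integral Menger curvature `M_p(X)` (innermost integration in `x`). -/
noncomputable def Mp (p : ℝ) (X : Set (EuclideanSpace ℝ (Fin 2))) : ℝ≥0∞ :=
  ∫⁻ z in X, ∫⁻ y in X, ∫⁻ x in X,
    (ENNReal.ofReal (menger x y z)) ^ p ∂μH[1] ∂μH[1] ∂μH[1]

/-- Intermediate energy `I_p(X)`. -/
noncomputable def Ip (p : ℝ) (X : Set (EuclideanSpace ℝ (Fin 2))) : ℝ≥0∞ :=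
  ∫⁻ y in X, ∫⁻ x in X,
    (⨆ z ∈ X, ENNReal.ofReal (menger x y z)) ^ p ∂μH[1] ∂μH[1]

/-- Global curvature energy `U_p(X)`. -/
noncomputable def Up (p : ℝ) (X : Set (EuclideanSpace ℝ (Fin 2))) : ℝ≥0∞ :=
  ∫⁻ x in X, (⨆ y ∈ X, ⨆ z ∈ X, ENNReal.ofReal (menger x y z)) ^ p ∂μH[1]

/-! ### Auxiliary lemmas -/

abbrev E2 := EuclideanSpace ℝ (Fin 2)

lemma pt_apply (a b : ℝ) (i : Fin 2) : pt a b i = ![a, b] i := rfl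

lemma pt_zero : pt 0 0 = 0 := by
  ext i; fin_cases i <;> simp [pt_apply]

lemma smul_pt (t a b : ℝ) : t • pt a b = pt (t*a) (t*b) := by
  ext i; fin_cases i <;> simp [pt_apply]

lemma sub_pt (a b c d : ℝ) : pt a b - pt c d = pt (a - c) (b - d) := by
  ext i; fin_cases i <;> simp [pt_apply]

lemma norm_pt (a b : ℝ) : ‖pt a b‖ = Real.sqrt (a^2 + b^2) := by
  simp [EuclideanSpace.norm_eq, Fin.sum_univ_two, pt_apply]

lemma pt_eq_smul (t : ℝ) : pt t 0 = t • pt 1 0 := by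
  rw [smul_pt]; norm_num

lemma collinear_smul {n : ℕ} (u : EuclideanSpace ℝ (Fin n)) (S : Set (EuclideanSpace ℝ (Fin n)))
    (h : ∀ w ∈ S, ∃ r : ℝ, w = r • u) : Collinear ℝ S := by
  rw [collinear_iff_exists_forall_eq_smul_vadd]
  exact ⟨0, u, fun w hw => by obtain ⟨r, hr⟩ := h w hw; exact ⟨r, by simp [hr]⟩⟩

lemma menger_nonneg {n : ℕ} (x y z : EuclideanSpace ℝ (Fin n)) : 0 ≤ menger x y z := by
  unfold menger
  split_ifs with h
  · apply div_nonneg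
    · have := Metric.infDist_nonneg (x := z)
        (s := (affineSpan ℝ ({x, y} : Set (EuclideanSpace ℝ (Fin n))) :
          Set (EuclideanSpace ℝ (Fin n))))
      linarith
    · exact mul_nonneg dist_nonneg dist_nonneg
  · exact le_refl _

lemma menger_comm (x y z : E2) : menger x y z = menger y x z := by
  unfold menger
  have hset : ({x, y, z} : Set E2) = {y, x, z} := Set.insert_comm x y {z}
  have hpair : ({x, y} : Set E2) = ({y, x} : Set E2) := Set.pair_comm x y
  rw [hset, hpair, mul_comm (dist x z) (dist y z)]
  apply if_congr _ rfl rfl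
  constructor <;> rintro ⟨h1, h2, h3, h4⟩
  · exact ⟨h1.symm, h3, h2, h4⟩
  · exact ⟨h1.symm, h3, h2, h4⟩

/-- The key geometric upper bound: if `x = s • u` with `s ≠ 0` and `y, z` lie on the two
rays spanned by `u` and `v`, then the Menger curvature is at most `2 / (|s| σ)`. -/
lemma menger_le {u v : E2} (hu : ‖u‖ = 1) (hv : ‖v‖ = 1) {σ : ℝ} (hσ : 0 < σ)
    (hd1 : ∀ a b : ℝ, |a| * σ ≤ dist (a • u) (b • v))
    (hd2 : ∀ a b : ℝ, |b| * σ ≤ dist (a • u) (b • v))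
    {s : ℝ} (hs : s ≠ 0) {y z : E2}
    (hy : (∃ c : ℝ, y = c • u) ∨ (∃ c : ℝ, y = c • v))
    (hz : (∃ t : ℝ, z = t • u) ∨ (∃ t : ℝ, z = t • v)) :
    menger (s • u) y z ≤ 2 / (|s| * σ) := by
  have hsσ : 0 < |s| * σ := mul_pos (abs_pos.mpr hs) hσ
  have hbound_pos : 0 < 2 / (|s| * σ) := div_pos two_pos hsσ
  set x := s • u with hx
  unfold menger
  split_ifs with h
  · obtain ⟨hxy, hyz, hxz, hncol⟩ := h
    have hdyz : 0 < dist y z := dist_pos.mpr hyz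
    have hdxz : 0 < dist x z := dist_pos.mpr hxz
    have hinf_nonneg : 0 ≤ Metric.infDist z (affineSpan ℝ ({x, y} : Set E2) : Set E2) :=
      Metric.infDist_nonneg
    rcases hz with ⟨t, rfl⟩ | ⟨t, rfl⟩
    · -- z = t • u on x's ray
      rcases hy with ⟨c, rfl⟩ | ⟨c, rfl⟩
      · exact absurd (collinear_smul u _ (by
          rintro w (rfl | rfl | rfl) <;> [exact ⟨s, rfl⟩; exact ⟨c, rfl⟩; exact ⟨t, rfl⟩])) hncol
      · by_cases hc : c = 0
        · refine absurd (collinear_smul u _ ?_) hncol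
          rintro w (rfl | rfl | rfl)
          · exact ⟨s, rfl⟩
          · exact ⟨0, by simp [hc]⟩
          · exact ⟨t, rfl⟩
        · have hts : t ≠ s := fun hts => hxz (by rw [hts])
          have hst : (0:ℝ) < |s - t| := by
            rw [abs_pos, sub_ne_zero]; exact fun h' => hts h'.symm
          set w : E2 := AffineMap.lineMap x (c • v) ((s - t)/s) with hw
          have hwmem : w ∈ (affineSpan ℝ ({x, c • v} : Set E2) : Set E2) :=
            AffineMap.lineMap_mem_affineSpan_pair _ x (c • v)
          have hzw : (t • u) - w = -(((s - t)/s) * c) • v := by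
            rw [hw, AffineMap.lineMap_apply_module, hx]
            match_scalars <;> field_simp <;> ring
          have hinf : Metric.infDist (t • u) (affineSpan ℝ ({x, c • v} : Set E2) : Set E2)
              ≤ |s - t| * |c| / |s| := by
            refine le_trans (Metric.infDist_le_dist_of_mem hwmem) ?_
            rw [dist_eq_norm, hzw, norm_smul, hv, mul_one, Real.norm_eq_abs,
              abs_neg, abs_mul, abs_div]
            exact le_of_eq (by ring)
          have hdxz_eq : dist x (t • u) = |s - t| := by
            rw [hx, dist_eq_norm, ← sub_smul, norm_smul, hu, mul_one, Real.norm_eq_abs]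
          have hdyz_ge : |c| * σ ≤ dist (c • v) (t • u) := by
            rw [dist_comm]; exact hd2 t c
          have hcpos : (0:ℝ) < |c| := abs_pos.mpr hc
          calc 2 * Metric.infDist (t • u) (affineSpan ℝ ({x, c • v} : Set E2) : Set E2)
                / (dist x (t • u) * dist (c • v) (t • u))
              ≤ 2 * (|s - t| * |c| / |s|) / (|s - t| * (|c| * σ)) := by
                gcongr 2 * ?_ / ?_
                · exact mul_le_mul (le_of_eq hdxz_eq.symm) hdyz_ge
                    (mul_nonneg hcpos.le hσ.le) dist_nonneg
            _ = 2 / (|s| * σ) := by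
                field_simp
    · -- z = t • v off x's ray
      have hdist : |s| * σ ≤ dist x (t • v) := hd1 s t
      have hinf : Metric.infDist (t • v) (affineSpan ℝ ({x, y} : Set E2) : Set E2)
          ≤ dist (t • v) y :=
        Metric.infDist_le_dist_of_mem (by exact_mod_cast right_mem_affineSpan_pair ℝ x y)
      calc 2 * Metric.infDist (t • v) (affineSpan ℝ ({x, y} : Set E2) : Set E2)
            / (dist x (t • v) * dist y (t • v))
          ≤ 2 * dist y (t • v) / (dist x (t • v) * dist y (t • v)) := by
            gcongr
            rw [dist_comm] at hinf; exact hinf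
        _ = 2 / dist x (t • v) := by
            rw [mul_comm (dist x (t • v))]
            field_simp
        _ ≤ 2 / (|s| * σ) := by gcongr
  · exact hbound_pos.le

/-- Distance from a point on the `u`-ray to a point on the `v`-ray, first version. -/
lemma dist_ray_ray1 (φ a b : ℝ) :
    |a| * |Real.sin φ| ≤ dist (a • pt 1 0) (b • pt (Real.cos φ) (Real.sin φ)) := by
  rw [dist_eq_norm, smul_pt, smul_pt, sub_pt, norm_pt]
  have h1 : |a| * |Real.sin φ| = Real.sqrt ((a * Real.sin φ)^2) := by
    rw [Real.sqrt_sq_eq_abs, abs_mul]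
  rw [h1]
  apply Real.sqrt_le_sqrt
  have hcs := Real.sin_sq_add_cos_sq φ
  nlinarith [sq_nonneg (a * Real.cos φ - b), hcs, sq_nonneg a, sq_nonneg b]

/-- Distance from a point on the `u`-ray to a point on the `v`-ray, second version. -/
lemma dist_ray_ray2 (φ a b : ℝ) :
    |b| * |Real.sin φ| ≤ dist (a • pt 1 0) (b • pt (Real.cos φ) (Real.sin φ)) := by
  rw [dist_eq_norm, smul_pt, smul_pt, sub_pt, norm_pt]
  have h1 : |b| * |Real.sin φ| = Real.sqrt ((b * Real.sin φ)^2) := by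
    rw [Real.sqrt_sq_eq_abs, abs_mul]
  rw [h1]
  apply Real.sqrt_le_sqrt
  nlinarith [sq_nonneg (a - b * Real.cos φ)]

lemma norm_pt_one_zero : ‖pt 1 0‖ = 1 := by
  rw [norm_pt]; norm_num

lemma norm_pt_cos_sin (φ : ℝ) : ‖pt (Real.cos φ) (Real.sin φ)‖ = 1 := by
  rw [norm_pt, Real.cos_sq_add_sin_sq φ, Real.sqrt_one]

/-- Membership in `Eset` in ray form. -/
lemma mem_Eset_iff {φ : ℝ} {x : E2} :
    x ∈ Eset φ ↔ (∃ t ∈ Set.Ico (0:ℝ) 1, x = t • pt 1 0) ∨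
      (∃ t ∈ Set.Ico (0:ℝ) 1, x = t • pt (Real.cos φ) (Real.sin φ)) := by
  unfold Eset
  constructor
  · rintro (⟨t, ht, rfl⟩ | ⟨t, ht, rfl⟩)
    · exact Or.inl ⟨t, ht, pt_eq_smul t⟩
    · exact Or.inr ⟨t, ht, rfl⟩
  · rintro (⟨t, ht, rfl⟩ | ⟨t, ht, rfl⟩)
    · exact Or.inl ⟨t, ht, (pt_eq_smul t).symm⟩
    · exact Or.inr ⟨t, ht, rfl⟩

/-- The lower bound at the right angle: explicit curvature of `(s,0), (0,s), (0,0)`. -/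
lemma menger_ge (s : ℝ) (hs : 0 < s) :
    Real.sqrt 2 / s ≤ menger (pt s 0) (pt 0 s) (pt 0 0) := by
  have hs' : s ≠ 0 := hs.ne'
  have hxy : pt s 0 ≠ pt 0 s := by
    intro h
    have := congrArg (· 0) h
    simp [pt_apply] at this
    exact hs' this
  have hyz : pt 0 s ≠ pt 0 0 := by
    intro h
    have := congrArg (· 1) h
    simp [pt_apply] at this
    exact hs' this
  have hxz : pt s 0 ≠ pt 0 0 := by
    intro h
    have := congrArg (· 0) h
    simp [pt_apply] at this
    exact hs' this
  have hncol : ¬ Collinear ℝ ({pt s 0, pt 0 s, pt 0 0} : Set E2) := by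
    intro hcol
    rw [collinear_iff_exists_forall_eq_smul_vadd] at hcol
    obtain ⟨p, d, hd⟩ := hcol
    obtain ⟨a, ha⟩ := hd (pt s 0) (by simp)
    obtain ⟨b, hb⟩ := hd (pt 0 s) (by simp [Set.mem_insert_iff])
    obtain ⟨c, hc⟩ := hd (pt 0 0) (by simp [Set.mem_insert_iff])
    have h1 : pt s 0 - pt 0 0 = (a - c) • d := by
      rw [ha, hc]; simp only [vadd_eq_add]
      rw [add_sub_add_right_eq_sub, ← sub_smul]
    have h2 : pt 0 s - pt 0 0 = (b - c) • d := by
      rw [hb, hc]; simp only [vadd_eq_add]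
      rw [add_sub_add_right_eq_sub, ← sub_smul]
    have e10 : (a - c) * d 0 = s := by
      have := congrArg (· 0) h1; simpa [pt_apply] using this.symm
    have e11 : (a - c) * d 1 = 0 := by
      have := congrArg (· 1) h1; simpa [pt_apply] using this.symm
    have e20 : (b - c) * d 0 = 0 := by
      have := congrArg (· 0) h2; simpa [pt_apply] using this.symm
    have e21 : (b - c) * d 1 = s := by
      have := congrArg (· 1) h2; simpa [pt_apply] using this.symm
    have hac : a - c ≠ 0 := by
      intro h; rw [h, zero_mul] at e10; exact hs' e10.symm
    have hd1 : d 1 = 0 := by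
      rcases mul_eq_zero.mp e11 with h | h
      · exact absurd h hac
      · exact h
    rw [hd1, mul_zero] at e21
    exact hs' e21.symm
  unfold menger
  rw [if_pos ⟨hxy, hyz, hxz, hncol⟩]
  have hdxz : dist (pt s 0) (pt 0 0) = s := by
    rw [dist_eq_norm, sub_pt, norm_pt]
    simp [abs_of_pos hs, Real.sqrt_sq hs.le]
  have hdyz : dist (pt 0 s) (pt 0 0) = s := by
    rw [dist_eq_norm, sub_pt, norm_pt]
    simp [Real.sqrt_sq hs.le]
  -- infDist lower bound
  have hinf : s * Real.sqrt 2 / 2 ≤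
      Metric.infDist (pt 0 0) (affineSpan ℝ ({pt s 0, pt 0 s} : Set E2) : Set E2) := by
    have hne : (affineSpan ℝ ({pt s 0, pt 0 s} : Set E2) : Set E2).Nonempty :=
      ⟨pt s 0, by exact_mod_cast left_mem_affineSpan_pair ℝ _ _⟩
    by_contra hlt
    push_neg at hlt
    obtain ⟨m, hm, hdm⟩ := (Metric.infDist_lt_iff hne).mp hlt
    -- m = lineMap x y r for some r
    have hm' : m ∈ affineSpan ℝ ({pt s 0, pt 0 s} : Set E2) := hm
    have hmem : (m - pt s 0) +ᵥ pt s 0 ∈ affineSpan ℝ ({pt s 0, pt 0 s} : Set E2) := by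
      simpa [vadd_eq_add, sub_add_cancel] using hm'
    obtain ⟨r, hr⟩ := vadd_left_mem_affineSpan_pair.mp hmem
    have hmeq : m = r • (pt 0 s - pt s 0) + pt s 0 := by
      have h' : r • (pt 0 s - pt s 0) = m - pt s 0 := by
        rw [← vsub_eq_sub (pt 0 s) (pt s 0)]; exact hr
      rw [h']; abel
    have hdist : dist (pt 0 0) m = Real.sqrt ((r*s - s)^2 + (r*s)^2) := by
      rw [dist_eq_norm, hmeq, sub_pt, smul_pt]
      have : pt 0 0 - (pt (r * (0 - s)) (r * (s - 0)) + pt s 0) = pt (r*s - s) (-(r*s)) := by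
        ext i; fin_cases i <;> simp [pt_apply] <;> ring_nf
      rw [this, norm_pt]
      ring_nf
    have hge : s * Real.sqrt 2 / 2 ≤ Real.sqrt ((r*s - s)^2 + (r*s)^2) := by
      have h2 : s * Real.sqrt 2 / 2 = Real.sqrt (s^2 / 2) := by
        rw [show s^2/2 = (s * Real.sqrt 2 / 2)^2 by
          rw [div_pow, mul_pow, Real.sq_sqrt (by norm_num : (0:ℝ) ≤ 2)]; ring]
        rw [Real.sqrt_sq (by positivity)]
      rw [h2]
      apply Real.sqrt_le_sqrt
      nlinarith [sq_nonneg (2*r*s - s)]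
    rw [hdist] at hdm
    linarith
  calc Real.sqrt 2 / s = 2 * (s * Real.sqrt 2 / 2) / (s * s) := by
        field_simp
    _ ≤ 2 * Metric.infDist (pt 0 0) (affineSpan ℝ ({pt s 0, pt 0 s} : Set E2) : Set E2)
          / (dist (pt s 0) (pt 0 0) * dist (pt 0 s) (pt 0 0)) := by
        rw [hdxz, hdyz]
        gcongr

/-! ### Measure-theoretic transport along rays -/

lemma isometry_ray {v : E2} (hv : ‖v‖ = 1) : Isometry (fun t : ℝ => t • v) := by
  apply Isometry.of_dist_eq
  intro a b
  rw [dist_eq_norm, ← sub_smul, norm_smul, hv, mul_one, Real.norm_eq_abs, Real.dist_eq]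

lemma emb_ray {v : E2} (hv : ‖v‖ = 1) : MeasurableEmbedding (fun t : ℝ => t • v) :=
  (isometry_ray hv).isClosedEmbedding.measurableEmbedding

lemma lintegral_ray {v : E2} (hv : ‖v‖ = 1) (g : E2 → ℝ≥0∞) {s : Set ℝ}
    (hs : MeasurableSet s) :
    ∫⁻ x in (fun t : ℝ => t • v) '' s, g x ∂μH[1] = ∫⁻ t in s, g (t • v) ∂volume := by
  have hiso := isometry_ray hv
  have hemb := emb_ray hv
  have hmap : μH[1].restrict ((fun t : ℝ => t • v) '' s)
      = Measure.map (fun t : ℝ => t • v) (volume.restrict s) := by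
    ext A hA
    rw [Measure.restrict_apply hA, Measure.map_apply hemb.measurable hA,
      Measure.restrict_apply (hemb.measurable hA)]
    have him : A ∩ (fun t : ℝ => t • v) '' s
        = (fun t : ℝ => t • v) '' ((fun t : ℝ => t • v) ⁻¹' A ∩ s) := by
      exact (Set.image_preimage_inter _ _ _).symm
    rw [him, hiso.hausdorffMeasure_image (Or.inl one_pos.le),
      ← MeasureTheory.hausdorffMeasure_real]
  rw [show (∫⁻ x in (fun t : ℝ => t • v) '' s, g x ∂μH[1])
      = ∫⁻ x, g x ∂(μH[1].restrict ((fun t : ℝ => t • v) '' s)) from rfl, hmap,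
    hemb.lintegral_map]

lemma hausdorff_singleton_zero : (μH[1] : Measure E2) ({(0:E2)} : Set E2) = 0 := by
  have h1 : ({(0:E2)} : Set E2) = (fun t : ℝ => t • pt 1 0) '' {0} := by
    rw [Set.image_singleton, zero_smul]
  rw [h1, (isometry_ray norm_pt_one_zero).hausdorffMeasure_image (Or.inl one_pos.le),
    MeasureTheory.hausdorffMeasure_real]
  exact measure_singleton 0

/-! ### Pointwise bounds on the supremum -/

/-- Pointwise upper bound for the supremum over `E_φ`. -/
lemma sup_le_of_mem {φ : ℝ} (hsin : Real.sin φ ≠ 0) {t : ℝ} (ht : 0 < t) {x : E2}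
    (hx : x = t • pt 1 0 ∨ x = t • pt (Real.cos φ) (Real.sin φ)) :
    (⨆ y ∈ Eset φ, ⨆ z ∈ Eset φ, ENNReal.ofReal (menger x y z))
      ≤ ENNReal.ofReal (2 / (t * |Real.sin φ|)) := by
  have hσ : 0 < |Real.sin φ| := abs_pos.mpr hsin
  apply iSup₂_le; intro y hy; apply iSup₂_le; intro z hz
  apply ENNReal.ofReal_le_ofReal
  have hy' := mem_Eset_iff.mp hy
  have hz' := mem_Eset_iff.mp hz
  have hy'' : (∃ c : ℝ, y = c • pt 1 0) ∨ (∃ c : ℝ, y = c • pt (Real.cos φ) (Real.sin φ)) :=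
    hy'.imp (fun ⟨c, _, e⟩ => ⟨c, e⟩) (fun ⟨c, _, e⟩ => ⟨c, e⟩)
  have hz'' : (∃ c : ℝ, z = c • pt 1 0) ∨ (∃ c : ℝ, z = c • pt (Real.cos φ) (Real.sin φ)) :=
    hz'.imp (fun ⟨c, _, e⟩ => ⟨c, e⟩) (fun ⟨c, _, e⟩ => ⟨c, e⟩)
  rcases hx with rfl | rfl
  · have h := menger_le norm_pt_one_zero (norm_pt_cos_sin φ) hσ
      (fun a b => dist_ray_ray1 φ a b) (fun a b => dist_ray_ray2 φ a b)
      ht.ne' hy'' hz''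
    rwa [abs_of_pos ht] at h
  · have h := menger_le (norm_pt_cos_sin φ) norm_pt_one_zero hσ
      (fun a b => by rw [dist_comm]; exact dist_ray_ray2 φ b a)
      (fun a b => by rw [dist_comm]; exact dist_ray_ray1 φ b a)
      ht.ne' hy''.symm hz''.symm
    rwa [abs_of_pos ht] at h

lemma pt_zero_one_eq : pt (Real.cos (π/2)) (Real.sin (π/2)) = pt 0 1 := by
  rw [Real.cos_pi_div_two, Real.sin_pi_div_two]

lemma mem_Eset_pi_div_two_left {t : ℝ} (ht : t ∈ Set.Ico (0:ℝ) 1) :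
    t • pt 1 0 ∈ Eset (π/2) :=
  Or.inl ⟨t, ht, (pt_eq_smul t).symm⟩

lemma mem_Eset_pi_div_two_right {t : ℝ} (ht : t ∈ Set.Ico (0:ℝ) 1) :
    t • pt 0 1 ∈ Eset (π/2) :=
  Or.inr ⟨t, ht, by rw [pt_zero_one_eq]⟩

/-- Pointwise lower bound for the supremum over `E_{π/2}`. -/
lemma le_sup_of_mem {t : ℝ} (ht : t ∈ Set.Ioo (0:ℝ) 1) {x : E2}
    (hx : x = t • pt 1 0 ∨ x = t • pt 0 1) :
    ENNReal.ofReal (Real.sqrt 2 / t)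
      ≤ ⨆ y ∈ Eset (π/2), ⨆ z ∈ Eset (π/2), ENNReal.ofReal (menger x y z) := by
  have ht0 := ht.1
  have htIco : t ∈ Set.Ico (0:ℝ) 1 := ⟨ht0.le, ht.2⟩
  have h0Ico : (0:ℝ) ∈ Set.Ico (0:ℝ) 1 := ⟨le_rfl, one_pos⟩
  have hy1 : pt 0 t = t • pt 0 1 := by rw [smul_pt]; norm_num
  have hz0 : pt 0 0 = (0:ℝ) • pt 1 0 := by rw [smul_pt]; norm_num
  have hx1 : pt t 0 = t • pt 1 0 := pt_eq_smul t
  rcases hx with rfl | rfl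
  · refine le_iSup₂_of_le (t • pt 0 1) (mem_Eset_pi_div_two_right htIco) ?_
    refine le_iSup₂_of_le ((0:ℝ) • pt 1 0) (mem_Eset_pi_div_two_left h0Ico) ?_
    apply ENNReal.ofReal_le_ofReal
    rw [← hx1, ← hy1, ← hz0]
    exact menger_ge t ht0
  · refine le_iSup₂_of_le (t • pt 1 0) (mem_Eset_pi_div_two_left htIco) ?_
    refine le_iSup₂_of_le ((0:ℝ) • pt 1 0) (mem_Eset_pi_div_two_left h0Ico) ?_
    apply ENNReal.ofReal_le_ofReal
    rw [← hy1, ← hx1, ← hz0, menger_comm]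
    exact menger_ge t ht0

lemma norm_pt_zero_one : ‖pt 0 1‖ = 1 := by
  rw [norm_pt]; norm_num

/-- `U_p(E_φ) ≤ c(φ)^p · U_p(E_{π/2})`. -/
theorem Up_Eset_le (φ : ℝ) :
    ∃ c : ℝ, 0 < c ∧ ∀ p : ℝ, 0 < p →
      Up p (Eset φ) ≤ ENNReal.ofReal (c ^ p) * Up p (Eset (π / 2)) := by
  by_cases hsin : Real.sin φ = 0
  · -- degenerate case: `E_φ` is contained in a line, so `U_p(E_φ) = 0`
    refine ⟨1, one_pos, fun p hp => ?_⟩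
    have hall : ∀ w ∈ Eset φ, ∃ r : ℝ, w = r • pt 1 0 := by
      intro w hw
      rcases mem_Eset_iff.mp hw with ⟨t, _, rfl⟩ | ⟨t, _, rfl⟩
      · exact ⟨t, rfl⟩
      · refine ⟨t * Real.cos φ, ?_⟩
        rw [hsin, smul_pt, smul_pt]; norm_num
    have hup : Up p (Eset φ) = 0 := by
      unfold Up
      refine le_antisymm ?_ zero_le
      have hle : ∫⁻ x in Eset φ, (⨆ y ∈ Eset φ, ⨆ z ∈ Eset φ,
            ENNReal.ofReal (menger x y z)) ^ p ∂μH[1]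
          ≤ ∫⁻ _x in Eset φ, 0 ∂μH[1] := by
        apply setLIntegral_mono measurable_const
        intro x hx
        have hsup : (⨆ y ∈ Eset φ, ⨆ z ∈ Eset φ, ENNReal.ofReal (menger x y z)) = 0 := by
          refine le_antisymm ?_ zero_le
          apply iSup₂_le; intro y hy; apply iSup₂_le; intro z hz
          have hm : menger x y z = 0 := by
            unfold menger
            rw [if_neg]
            rintro ⟨-, -, -, h4⟩
            refine h4 (collinear_smul (pt 1 0) _ ?_)
            rintro w (rfl | rfl | rfl)
            · exact hall _ hx
            · exact hall _ hy
            · exact hall _ hz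
          simp [hm]
        rw [hsup, ENNReal.zero_rpow_of_pos hp]
      simpa using hle
    rw [hup]; exact zero_le
  · -- main case
    have hσ : (0:ℝ) < |Real.sin φ| := abs_pos.mpr hsin
    refine ⟨Real.sqrt 2 / |Real.sin φ|, by positivity, fun p hp => ?_⟩
    set σ := |Real.sin φ| with hσdef
    set J := ∫⁻ t in Set.Ioo (0:ℝ) 1, (ENNReal.ofReal (Real.sqrt 2 / t)) ^ p ∂volume with hJdef
    set cE := ENNReal.ofReal ((Real.sqrt 2 / σ) ^ p) with hcEdef
    set F := fun x : E2 => (⨆ y ∈ Eset φ, ⨆ z ∈ Eset φ,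
      ENNReal.ofReal (menger x y z)) ^ p with hFdef
    set G := fun x : E2 => (⨆ y ∈ Eset (π/2), ⨆ z ∈ Eset (π/2),
      ENNReal.ofReal (menger x y z)) ^ p with hGdef
    -- pointwise splitting of the constant
    have hptwise : ∀ t : ℝ, 0 < t →
        (ENNReal.ofReal (2 / (t * σ))) ^ p = cE * (ENNReal.ofReal (Real.sqrt 2 / t)) ^ p := by
      intro t ht
      have h2 : (2:ℝ) / (t * σ) = (Real.sqrt 2 / σ) * (Real.sqrt 2 / t) := by
        rw [div_mul_div_comm, Real.mul_self_sqrt (by norm_num : (0:ℝ) ≤ 2), mul_comm σ t]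
      rw [h2, ENNReal.ofReal_mul (by positivity), ENNReal.mul_rpow_of_nonneg _ _ hp.le,
        ENNReal.ofReal_rpow_of_pos (by positivity), hcEdef]
    -- upper bound for the integral over each ray of `E_φ`
    have hray : ∀ v : E2, ‖v‖ = 1 →
        (∀ t : ℝ, t ∈ Set.Ioo (0:ℝ) 1 → (⨆ y ∈ Eset φ, ⨆ z ∈ Eset φ,
            ENNReal.ofReal (menger (t • v) y z)) ≤ ENNReal.ofReal (2 / (t * σ))) →
        ∫⁻ x in (fun t : ℝ => t • v) '' Set.Ioo 0 1, F x ∂μH[1] ≤ cE * J := by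
      intro v hv hbd
      rw [lintegral_ray hv _ measurableSet_Ioo]
      calc ∫⁻ t in Set.Ioo (0:ℝ) 1, F (t • v) ∂volume
          ≤ ∫⁻ t in Set.Ioo (0:ℝ) 1, cE * (ENNReal.ofReal (Real.sqrt 2 / t)) ^ p ∂volume := by
            apply setLIntegral_mono' measurableSet_Ioo
            intro t ht
            rw [← hptwise t ht.1, hFdef]
            exact ENNReal.rpow_le_rpow (hbd t ht) hp.le
        _ = cE * J := by
            rw [hJdef, ← lintegral_const_mul' _ _ (show cE ≠ ⊤ from ENNReal.ofReal_ne_top)]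
    -- decomposition of `E_φ`
    have hsub : Eset φ ⊆ ({(0:E2)} ∪ (fun t : ℝ => t • pt 1 0) '' Set.Ioo 0 1)
        ∪ (fun t : ℝ => t • pt (Real.cos φ) (Real.sin φ)) '' Set.Ioo 0 1 := by
      intro x hx
      rcases mem_Eset_iff.mp hx with ⟨t, ht, rfl⟩ | ⟨t, ht, rfl⟩
      · rcases eq_or_lt_of_le ht.1 with h0 | h0
        · exact Or.inl (Or.inl (by simp [← h0]))
        · exact Or.inl (Or.inr ⟨t, ⟨h0, ht.2⟩, rfl⟩)
      · rcases eq_or_lt_of_le ht.1 with h0 | h0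
        · exact Or.inl (Or.inl (by simp [← h0]))
        · exact Or.inr ⟨t, ⟨h0, ht.2⟩, rfl⟩
    have hUp : Up p (Eset φ) ≤ cE * (J + J) := by
      unfold Up
      calc ∫⁻ x in Eset φ, F x ∂μH[1]
          ≤ ∫⁻ x in ({(0:E2)} ∪ (fun t : ℝ => t • pt 1 0) '' Set.Ioo 0 1)
              ∪ (fun t : ℝ => t • pt (Real.cos φ) (Real.sin φ)) '' Set.Ioo 0 1, F x ∂μH[1] :=
            lintegral_mono' (Measure.restrict_mono hsub le_rfl) le_rfl
        _ ≤ (∫⁻ x in ({(0:E2)} ∪ (fun t : ℝ => t • pt 1 0) '' Set.Ioo 0 1), F x ∂μH[1])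
              + ∫⁻ x in (fun t : ℝ => t • pt (Real.cos φ) (Real.sin φ)) '' Set.Ioo 0 1,
                F x ∂μH[1] := lintegral_union_le _ _ _
        _ ≤ ((∫⁻ x in ({(0:E2)} : Set E2), F x ∂μH[1])
              + ∫⁻ x in (fun t : ℝ => t • pt 1 0) '' Set.Ioo 0 1, F x ∂μH[1])
              + ∫⁻ x in (fun t : ℝ => t • pt (Real.cos φ) (Real.sin φ)) '' Set.Ioo 0 1,
                F x ∂μH[1] := add_le_add_left (lintegral_union_le _ _ _) _
        _ ≤ (0 + cE * J) + cE * J := by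
            refine add_le_add (add_le_add ?_ ?_) ?_
            · exact le_of_eq (setLIntegral_measure_zero _ _ hausdorff_singleton_zero)
            · exact hray _ norm_pt_one_zero
                (fun t ht => sup_le_of_mem hsin ht.1 (Or.inl rfl))
            · exact hray _ (norm_pt_cos_sin φ)
                (fun t ht => sup_le_of_mem hsin ht.1 (Or.inr rfl))
        _ = cE * (J + J) := by ring
    have hlow : J + J ≤ Up p (Eset (π/2)) := by
      have hB2m : MeasurableSet ((fun t : ℝ => t • pt 0 1) '' Set.Ioo 0 1) :=
        (emb_ray norm_pt_zero_one).measurableSet_image' measurableSet_Ioo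
      have hdisj : Disjoint ((fun t : ℝ => t • pt 1 0) '' Set.Ioo 0 1)
          ((fun t : ℝ => t • pt 0 1) '' Set.Ioo 0 1) := by
        rw [Set.disjoint_left]
        rintro x ⟨a, ha, rfl⟩ ⟨b, hb, hbe⟩
        change b • pt 0 1 = a • pt 1 0 at hbe
        rw [smul_pt, smul_pt] at hbe
        have h0 := congrArg (· 0) hbe
        simp [pt_apply] at h0
        exact absurd h0 (ne_of_lt ha.1)
      have hsub2 : ((fun t : ℝ => t • pt 1 0) '' Set.Ioo 0 1)
          ∪ ((fun t : ℝ => t • pt 0 1) '' Set.Ioo 0 1) ⊆ Eset (π/2) := by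
        rintro x (⟨t, ht, rfl⟩ | ⟨t, ht, rfl⟩)
        · exact mem_Eset_pi_div_two_left ⟨ht.1.le, ht.2⟩
        · exact mem_Eset_pi_div_two_right ⟨ht.1.le, ht.2⟩
      have hJ1 : ∀ v : E2, ‖v‖ = 1 →
          (∀ t : ℝ, t ∈ Set.Ioo (0:ℝ) 1 → ENNReal.ofReal (Real.sqrt 2 / t) ≤
            ⨆ y ∈ Eset (π/2), ⨆ z ∈ Eset (π/2), ENNReal.ofReal (menger (t • v) y z)) →
          J ≤ ∫⁻ x in (fun t : ℝ => t • v) '' Set.Ioo 0 1, G x ∂μH[1] := by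
        intro v hv hbd
        rw [lintegral_ray hv _ measurableSet_Ioo, hJdef]
        apply setLIntegral_mono' measurableSet_Ioo
        intro t ht
        rw [hGdef]
        exact ENNReal.rpow_le_rpow (hbd t ht) hp.le
      calc J + J
          ≤ (∫⁻ x in (fun t : ℝ => t • pt 1 0) '' Set.Ioo 0 1, G x ∂μH[1])
            + ∫⁻ x in (fun t : ℝ => t • pt 0 1) '' Set.Ioo 0 1, G x ∂μH[1] :=
            add_le_add
              (hJ1 _ norm_pt_one_zero (fun t ht => le_sup_of_mem ht (Or.inl rfl)))
              (hJ1 _ norm_pt_zero_one (fun t ht => le_sup_of_mem ht (Or.inr rfl)))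
        _ = ∫⁻ x in ((fun t : ℝ => t • pt 1 0) '' Set.Ioo 0 1)
              ∪ ((fun t : ℝ => t • pt 0 1) '' Set.Ioo 0 1), G x ∂μH[1] :=
            (lintegral_union hB2m hdisj).symm
        _ ≤ Up p (Eset (π/2)) :=
            lintegral_mono' (Measure.restrict_mono hsub2 le_rfl) le_rfl
    calc Up p (Eset φ) ≤ cE * (J + J) := hUp
      _ ≤ cE * Up p (Eset (π/2)) := mul_le_mul_right hlow _
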